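/- Fix an integer p ≥ 3, let λ = 2cos(π/p), and let U(x) = λ − 1/x. Then for every integer k with 2 ≤ k ≤ p−1 one has U^k(0) · U^{p−k+1}(0) = 1, i.e. 1/(U^k(0)) = U^{p−k+1}(0). -/

import Mathlib

open Real Matrix Filter

noncomputable section

/-- `λ_p = 2 cos (π / p)`, the minimal translation length of the Hecke group `G_p`. -/
def heckeLambda (p : ℕ) : ℝ := 2 * Real.cos (Real.pi / p)

/-- The matrix `S = [[1, λ], [0, 1]]`. -/
def Smat (l : ℝ) : Matrix (Fin 2) (Fin 2) ℝ := !![1, l; 0, 1]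

/-- The matrix `T = [[0, -1], [1, 0]]`. -/
def Tmat : Matrix (Fin 2) (Fin 2) ℝ := !![0, -1; 1, 0]

/-- The matrix `U = S * T = [[λ, -1], [1, 0]]`. -/
def Umat (l : ℝ) : Matrix (Fin 2) (Fin 2) ℝ := !![l, -1; 1, 0]

/-- The matrix `S^r = [[1, rλ], [0, 1]]` for an integer exponent `r`. -/
def SmatZ (l : ℝ) (r : ℤ) : Matrix (Fin 2) (Fin 2) ℝ := !![1, (r : ℝ) * l; 0, 1]

/-- Möbius (linear fractional) action of a `2 × 2` real matrix on a real number. -/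
def mobius (M : Matrix (Fin 2) (Fin 2) ℝ) (x : ℝ) : ℝ :=
  (M 0 0 * x + M 0 1) / (M 1 0 * x + M 1 1)

/-- `U^k(0)`, the image of `0` under `k` iterations of the linear fractional
transformation `U : x ↦ λ - 1/x`; as a ratio of entries of the matrix power `U^k`. -/
def Uorbit (l : ℝ) (k : ℕ) : ℝ := ((Umat l) ^ k) 0 1 / ((Umat l) ^ k) 1 1

/-- The complete quotients `α_j` of the (negative) `λ`-continued fraction algorithm:
`α_0 = α`, `α_{j+1} = 1 / (r_j λ - α_j)` with `r_j = ⌊α_j / λ⌋ + 1`. -/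
def cq (l α : ℝ) : ℕ → ℝ
  | 0 => α
  | j + 1 => 1 / (((⌊cq l α j / l⌋ : ℝ) + 1) * l - cq l α j)

/-- The partial quotients `r_j = ⌊α_j / λ⌋ + 1` of the `λ`-continued fraction of `α`. -/
def pq (l α : ℝ) (j : ℕ) : ℤ := ⌊cq l α j / l⌋ + 1

/-- `S` as an element of `SL(2, ℝ)`. -/
def Sgen (l : ℝ) : Matrix.SpecialLinearGroup (Fin 2) ℝ :=
  ⟨!![1, l; 0, 1], by norm_num [Matrix.det_fin_two_of]⟩

/-- `T` as an element of `SL(2, ℝ)`. -/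
def Tgen : Matrix.SpecialLinearGroup (Fin 2) ℝ :=
  ⟨!![0, -1; 1, 0], by norm_num [Matrix.det_fin_two_of]⟩

/-- The Hecke group `G_p`, the subgroup of `SL(2, ℝ)` generated by `S` and `T`. -/
def heckeGroup (l : ℝ) : Subgroup (Matrix.SpecialLinearGroup (Fin 2) ℝ) :=
  Subgroup.closure {Sgen l, Tgen}

/-- `M = [[a, b], [c, d]]` fixes `α` as a linear fractional transformation, i.e.
`α` is a root of `c x² + (d - a) x - b = 0`. -/
def fixesQuad (M : Matrix.SpecialLinearGroup (Fin 2) ℝ) (α : ℝ) : Prop :=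
  M.1 1 0 * α ^ 2 + (M.1 1 1 - M.1 0 0) * α - M.1 0 1 = 0

/-- `α` is a hyperbolic fixed point of the Hecke group `G(λ)`. -/
def IsHypFixedPt (l α : ℝ) : Prop :=
  ∃ M ∈ heckeGroup l, 2 < |M.1 0 0 + M.1 1 1| ∧ fixesQuad M α

/-- `α` is a hyperbolic fixed point of `G(λ)` with Hecke conjugate `α'`
(the other root of the fixed-point quadratic). -/
def IsHypPair (l α α' : ℝ) : Prop :=
  ∃ M ∈ heckeGroup l, 2 < |M.1 0 0 + M.1 1 1| ∧ fixesQuad M α ∧ fixesQuad M α' ∧ α' ≠ α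

/-- A hyperbolic fixed point is `G_p`-reduced when its complete-quotient sequence is
purely periodic. -/
def GpReduced (l β : ℝ) : Prop :=
  IsHypFixedPt l β ∧ ∃ m, 1 ≤ m ∧ cq l β m = β

/-- The map `Φ_p : [0, ∞) → [0, ∞)`: `Φ_p(x) = T U^i (x)` when
`U^{p-i+1}(0) ≤ x < U^{p-i}(0)` for the (unique) `i` with `1 ≤ i ≤ p - 2`,
and `Φ_p(x) = x - λ` when `x ≥ λ`. -/
def Phi (p : ℕ) (l : ℝ) (x : ℝ) : ℝ :=
  @dite ℝ (∃ i : ℕ, 1 ≤ i ∧ i ≤ p - 2 ∧ Uorbit l (p - i + 1) ≤ x ∧ x < Uorbit l (p - i))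
    (Classical.propDecidable _)
    (fun h => mobius (Tmat * (Umat l) ^ h.choose) x)
    (fun _ => x - l)

/-- `C_{n-j, n}`: the partial convergents computed by downward recursion,
`C_{n,n} = r_n λ` and `C_{m,n} = r_m λ - 1 / C_{m+1,n}`. -/
def convAux (l α : ℝ) (n : ℕ) : ℕ → ℝ
  | 0 => (pq l α n : ℝ) * l
  | j + 1 => (pq l α (n - (j + 1)) : ℝ) * l - 1 / convAux l α n j

/-- The `n`-th convergent `C_n = C_{0,n}` of the `λ`-continued fraction of `α`. -/
def conv (l α : ℝ) (n : ℕ) : ℝ := convAux l α n n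

/-- The word `S^{r_0} T S^{r_1} T ⋯ S^{r_n} T`. -/
def cfWord (l : ℝ) (r : ℕ → ℤ) (n : ℕ) : Matrix (Fin 2) (Fin 2) ℝ :=
  ((List.range (n + 1)).map fun j => SmatZ l (r j) * Tmat).prod

lemma sin_key (θ x : ℝ) : Real.sin x * (2 * Real.cos θ) + -Real.sin (x - θ) = Real.sin (x + θ) := by
  rw [Real.sin_add, Real.sin_sub]; ring

lemma Umat_pow (θ : ℝ) (hθ : Real.sin θ ≠ 0) (k : ℕ) :
    (Umat (2 * Real.cos θ)) ^ (k + 1) =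
      !![Real.sin (((k : ℝ) + 2) * θ) / Real.sin θ, -(Real.sin (((k : ℝ) + 1) * θ) / Real.sin θ);
         Real.sin (((k : ℝ) + 1) * θ) / Real.sin θ, -(Real.sin ((k : ℝ) * θ) / Real.sin θ)] := by
  induction k with
  | zero =>
    ext i j
    fin_cases i <;> fin_cases j <;>
      simp [Umat, pow_one] <;> field_simp <;>
      rw [show (2:ℝ) * θ = θ + θ by ring] <;> rw [Real.sin_add] <;> ring
  | succ k ih =>
    rw [pow_succ, ih]
    ext i j
    fin_cases i <;> fin_cases j
    · simp [Umat, Matrix.mul_apply, Fin.sum_univ_two]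
      field_simp
      rw [show θ * ((k:ℝ)+1) = ((k:ℝ)+2) * θ - θ by ring,
        show θ * ((k:ℝ)+1+2) = ((k:ℝ)+2) * θ + θ by ring]
      have := sin_key θ (((k:ℝ)+2) * θ); linarith
    · simp [Umat, Matrix.mul_apply, Fin.sum_univ_two]
      push_cast
      ring_nf
    · simp [Umat, Matrix.mul_apply, Fin.sum_univ_two]
      field_simp
      rw [show ((k:ℝ)) * θ = ((k:ℝ)+1) * θ - θ by ring,
        show θ * ((k:ℝ)+1+1) = ((k:ℝ)+1) * θ + θ by ring]
      have := sin_key θ (((k:ℝ)+1) * θ); linarith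
    · simp [Umat, Matrix.mul_apply, Fin.sum_univ_two]

lemma Uorbit_formula (θ : ℝ) (hθ : Real.sin θ ≠ 0) (m : ℕ) :
    Uorbit (2 * Real.cos θ) (m + 1) =
      Real.sin (((m : ℝ) + 1) * θ) / Real.sin ((m : ℝ) * θ) := by
  rw [Uorbit, Umat_pow θ hθ m]
  have : ∀ a b c d : ℝ, (!![a, b; c, d]) 0 1 = b ∧ (!![a, b; c, d]) 1 1 = d := by
    intro a b c d; constructor <;> simp
  rw [(this _ _ _ _).1, (this _ _ _ _).2, neg_div_neg_eq, div_div_div_cancel_right₀ hθ _ _]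

/-- for `2 ≤ k ≤ p - 1`, `U^k(0) · U^{p-k+1}(0) = 1`,
i.e. `1 / U^k(0) = U^{p-k+1}(0)`. -/
theorem hecke_Uorbit_reciprocal (p : ℕ) (hp : 3 ≤ p) :
    ∀ k : ℕ, 2 ≤ k → k ≤ p - 1 →
      Uorbit (heckeLambda p) k * Uorbit (heckeLambda p) (p - k + 1) = 1 ∧
      1 / Uorbit (heckeLambda p) k = Uorbit (heckeLambda p) (p - k + 1) := by
  intro k hk2 hkp
  have hp0 : (0:ℝ) < p := by positivity
  have hp3 : (3:ℝ) ≤ p := by exact_mod_cast hp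
  set θ := Real.pi / p with hθdef
  have hθpos : 0 < θ := div_pos Real.pi_pos hp0
  have hθlt : θ < Real.pi := by
    rw [hθdef, div_lt_iff₀ hp0]
    nlinarith [Real.pi_pos]
  have hsθ : Real.sin θ ≠ 0 := ne_of_gt (Real.sin_pos_of_pos_of_lt_pi hθpos hθlt)
  have hl : heckeLambda p = 2 * Real.cos θ := rfl
  obtain ⟨m, rfl⟩ : ∃ m, k = m + 1 := ⟨k - 1, by omega⟩
  have hm1 : 1 ≤ m := by omega
  have hm2 : m + 2 ≤ p := by omega
  set j := p - (m + 1) with hjdef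
  have hj1 : 1 ≤ j := by omega
  have hjm : j + (m + 1) = p := by omega
  have hjc : (j : ℝ) = (p : ℝ) - ((m : ℝ) + 1) := by
    have := congrArg (Nat.cast : ℕ → ℝ) hjm
    push_cast at this
    linarith
  have e1 : Uorbit (heckeLambda p) (m + 1) =
      Real.sin (((m : ℝ) + 1) * θ) / Real.sin ((m : ℝ) * θ) := by
    rw [hl]; exact Uorbit_formula θ hsθ m
  have e2 : Uorbit (heckeLambda p) (p - (m + 1) + 1) =
      Real.sin (((j : ℝ) + 1) * θ) / Real.sin ((j : ℝ) * θ) := by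
    rw [hl, ← hjdef]; exact Uorbit_formula θ hsθ j
  have s1 : Real.sin (((j : ℝ) + 1) * θ) = Real.sin ((m : ℝ) * θ) := by
    rw [show ((j : ℝ) + 1) * θ = Real.pi - (m : ℝ) * θ by
      rw [hjc, hθdef]; field_simp; ring, Real.sin_pi_sub]
  have s2 : Real.sin ((j : ℝ) * θ) = Real.sin (((m : ℝ) + 1) * θ) := by
    rw [show (j : ℝ) * θ = Real.pi - ((m : ℝ) + 1) * θ by
      rw [hjc, hθdef]; field_simp, Real.sin_pi_sub]
  have hmθ : Real.sin ((m : ℝ) * θ) ≠ 0 := by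
    refine ne_of_gt (Real.sin_pos_of_pos_of_lt_pi ?_ ?_)
    · have : (1:ℝ) ≤ m := by exact_mod_cast hm1
      nlinarith
    · rw [hθdef]
      rw [mul_div_assoc', div_lt_iff₀ hp0]
      have : (m:ℝ) + 2 ≤ p := by exact_mod_cast hm2
      nlinarith [Real.pi_pos]
  have hm1θ : Real.sin (((m : ℝ) + 1) * θ) ≠ 0 := by
    refine ne_of_gt (Real.sin_pos_of_pos_of_lt_pi ?_ ?_)
    · positivity
    · rw [hθdef]
      rw [mul_div_assoc', div_lt_iff₀ hp0]
      have : (m:ℝ) + 2 ≤ p := by exact_mod_cast hm2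
      nlinarith [Real.pi_pos]
  have hprod : Uorbit (heckeLambda p) (m + 1) * Uorbit (heckeLambda p) (p - (m + 1) + 1) = 1 := by
    rw [e1, e2, s1, s2, div_mul_div_comm, mul_comm (Real.sin ((m:ℝ) * θ))]
    exact div_self (mul_ne_zero hm1θ hmθ)
  refine ⟨hprod, ?_⟩
  have hne : Uorbit (heckeLambda p) (m + 1) ≠ 0 := left_ne_zero_of_mul_eq_one hprod
  rw [div_eq_iff hne, mul_comm]
  exact hprod.symm
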